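/- Let μ ∈ ℂ and let k ∈ ℕ with k ≥ 1. Then there do not exist polynomials p, q ∈ ℂ[X] with p ≠ 0 and q ≠ 0 such that for every z ∈ ℂ with z ≠ 0 and q(z) ≠ 0, the function w ↦ p(w)/q(w) is differentiable at z with z·(p/q)'(z) = (μ + k·z)·(p(z)/q(z)). Equivalently, the equation x·f' = (μ + k·x)·f has no nonzero rational solution f ∈ ℂ(x) (the solutions are constant multiples of x^μ·e^{k·x}, which is not rational). -/

import Mathlib

open Polynomial

/-- For `k ≥ 1`, the equation `x f' = (μ + k x) f` has no nonzero rational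
solution (the solutions are constant multiples of `x^μ e^{k x}`, which is not
rational). -/
theorem xpow_mu_exp_kx_not_rational (μ : ℂ) (k : ℕ) (hk : 1 ≤ k) :
    ¬ ∃ p q : Polynomial ℂ, p ≠ 0 ∧ q ≠ 0 ∧
      ∀ z : ℂ, z ≠ 0 → q.eval z ≠ 0 →
        ∃ d : ℂ, HasDerivAt (fun w : ℂ => p.eval w / q.eval w) d z ∧
          z * d = (μ + (k : ℂ) * z) * (p.eval z / q.eval z) := by
  rintro ⟨p, q, hp, hq, H⟩
  have hk0 : (k : ℂ) ≠ 0 := Nat.cast_ne_zero.mpr (by omega)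
  set r : Polynomial ℂ :=
    X * (derivative p * q - p * derivative q) - (C μ + C (k:ℂ) * X) * (p * q) with hrdef
  have hroots : {z : ℂ | z ≠ 0 ∧ q.eval z ≠ 0} ⊆ {z | r.IsRoot z} := by
    rintro z ⟨hz0, hqz⟩
    obtain ⟨d, hd, heq⟩ := H z hz0 hqz
    have hd' : HasDerivAt (fun w : ℂ => p.eval w / q.eval w)
        (((derivative p).eval z * q.eval z - p.eval z * (derivative q).eval z)
          / (q.eval z) ^ 2) z :=
      (p.hasDerivAt z).div (q.hasDerivAt z) hqz
    have hdd : d = ((derivative p).eval z * q.eval z - p.eval z * (derivative q).eval z)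
          / (q.eval z) ^ 2 := hd.unique hd'
    subst hdd
    have : z * ((derivative p).eval z * q.eval z - p.eval z * (derivative q).eval z)
        = (μ + (k : ℂ) * z) * (p.eval z * q.eval z) := by
      field_simp at heq
      apply mul_right_cancel₀ hqz
      linear_combination (eval z q) * heq
    simp only [Set.mem_setOf_eq, IsRoot, hrdef, eval_sub, eval_mul, eval_add, eval_X, eval_C]
    linear_combination this
  have hr0 : r = 0 := by
    apply Polynomial.eq_zero_of_infinite_isRoot
    apply Set.Infinite.mono hroots
    have hfin : {z : ℂ | ¬(z ≠ 0 ∧ q.eval z ≠ 0)}.Finite := by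
      have he : {z : ℂ | ¬(z ≠ 0 ∧ q.eval z ≠ 0)} = {0} ∪ {z | q.IsRoot z} := by
        ext z; simp [not_and_or, IsRoot, or_comm]; tauto
      rw [he]
      exact (Set.finite_singleton 0).union (Polynomial.finite_setOf_isRoot hq)
    have := hfin.infinite_compl
    convert this using 1
    ext z; simp
  have hE : X * (derivative p * q - p * derivative q) = (C μ + C (k:ℂ) * X) * (p * q) :=
    sub_eq_zero.mp hr0
  -- degree contradiction
  have hdp : p.degree ≠ ⊥ := degree_eq_bot.not.mpr hp
  have hdq : q.degree ≠ ⊥ := degree_eq_bot.not.mpr hq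
  have hlin : (C μ + C (k:ℂ) * X).degree = 1 := by
    rw [add_comm]; exact degree_linear hk0
  have h1 : (derivative p * q).degree < p.degree + q.degree := by
    rw [degree_mul]
    exact WithBot.add_lt_add_right hdq (degree_derivative_lt hp)
  have h2 : (p * derivative q).degree < p.degree + q.degree := by
    rw [degree_mul]
    exact WithBot.add_lt_add_left hdp (degree_derivative_lt hq)
  have hL : (X * (derivative p * q - p * derivative q)).degree
      < ((C μ + C (k:ℂ) * X) * (p * q)).degree := by
    rw [degree_mul, degree_mul, degree_mul, hlin, degree_X]
    exact WithBot.add_lt_add_left (by simp) (lt_of_le_of_lt (degree_sub_le _ _) (max_lt h1 h2))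
  rw [hE] at hL
  exact lt_irrefl _ hL
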